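/- arXiv:1503.02707 — 6 statements merged into one kernel-verified Lean document; each statement's English description precedes it below -/
import Mathlib

section
/- If A is any subset of a fuzzy Riesz space X, then the disjoint complement A^d is a fuzzy band of X. -/
/-- A fuzzy Riesz space structure on a real vector space `X`:
a fuzzy order `μ : X × X → [0,1]` compatible with the vector structure,
together with binary suprema and infima with respect to the fuzzy order. -/
structure FuzzyRiesz (X : Type*) [AddCommGroup X] [Module ℝ X] where
  μ : X → X → ℝ
  nonneg : ∀ x y : X, 0 ≤ μ x y
  le_one : ∀ x y : X, μ x y ≤ 1
  refl : ∀ x : X, μ x x = 1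
  antisymm : ∀ x y : X, 1 < μ x y + μ y x → x = y
  trans : ∀ x y z : X, min (μ x y) (μ y z) ≤ μ x z
  add_compat : ∀ x y z : X, 1/2 < μ x y → μ x y ≤ μ (x + z) (y + z)
  smul_compat : ∀ (x y : X) (c : ℝ), 0 ≤ c → 1/2 < μ x y → μ x y ≤ μ (c • x) (c • y)
  sup : X → X → X
  inf : X → X → X
  le_sup_left : ∀ x y : X, 1/2 < μ x (sup x y)
  le_sup_right : ∀ x y : X, 1/2 < μ y (sup x y)
  sup_le : ∀ x y z : X, 1/2 < μ x z → 1/2 < μ y z → 1/2 < μ (sup x y) z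
  inf_le_left : ∀ x y : X, 1/2 < μ (inf x y) x
  inf_le_right : ∀ x y : X, 1/2 < μ (inf x y) y
  le_inf : ∀ x y z : X, 1/2 < μ z x → 1/2 < μ z y → 1/2 < μ z (inf x y)

namespace FuzzyRiesz

universe v

variable {X : Type*} [AddCommGroup X] [Module ℝ X]

/-- The absolute value `|x| = x ∨ (−x)`. -/
def fabs (F : FuzzyRiesz X) (x : X) : X := F.sup x (-x)

/-- `x` is positive: `μ(0,x) > 1/2`. -/
def Pos (F : FuzzyRiesz X) (x : X) : Prop := 1/2 < F.μ 0 x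

/-- `S⁺`, the set of positive elements of `S`. -/
def posPart (F : FuzzyRiesz X) (S : Set X) : Set X := {x ∈ S | F.Pos x}

/-- `y` is an upper bound of `A`. -/
def UpperBound (F : FuzzyRiesz X) (A : Set X) (y : X) : Prop := ∀ x ∈ A, 1/2 < F.μ x y

/-- `y` is a lower bound of `A`. -/
def LowerBound (F : FuzzyRiesz X) (A : Set X) (y : X) : Prop := ∀ x ∈ A, 1/2 < F.μ y x

/-- `z = sup A` in the fuzzy order. -/
def IsSup (F : FuzzyRiesz X) (A : Set X) (z : X) : Prop :=
  F.UpperBound A z ∧ ∀ y : X, F.UpperBound A y → 1/2 < F.μ z y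

/-- `z = inf A` in the fuzzy order. -/
def IsInf (F : FuzzyRiesz X) (A : Set X) (z : X) : Prop :=
  F.LowerBound A z ∧ ∀ y : X, F.LowerBound A y → 1/2 < F.μ y z

/-- `z = inf A`, computed relative to the subset `Y` (lower bounds taken in `Y`). -/
def IsInfIn (F : FuzzyRiesz X) (Y A : Set X) (z : X) : Prop :=
  F.LowerBound A z ∧ ∀ y ∈ Y, F.LowerBound A y → 1/2 < F.μ y z

/-- A set is fuzzy solid if `μ(|x|,|y|) > 1/2` and `y ∈ A` imply `x ∈ A`. -/
def Solid (F : FuzzyRiesz X) (A : Set X) : Prop :=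
  ∀ x y : X, 1/2 < F.μ (F.fabs x) (F.fabs y) → y ∈ A → x ∈ A

/-- A fuzzy ideal: a fuzzy solid vector subspace. -/
structure IsIdeal (F : FuzzyRiesz X) (I : Set X) : Prop where
  zero_mem : (0 : X) ∈ I
  add_mem : ∀ {x y : X}, x ∈ I → y ∈ I → x + y ∈ I
  smul_mem : ∀ (c : ℝ) {x : X}, x ∈ I → c • x ∈ I
  solid : ∀ x y : X, 1/2 < F.μ (F.fabs x) (F.fabs y) → y ∈ I → x ∈ I

/-- A fuzzy ideal of the subspace `Y` (with the restricted fuzzy order and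
vector structure): a vector subspace of `Y` that is solid relative to `Y`. -/
structure IsIdealIn (F : FuzzyRiesz X) (Y I : Set X) : Prop where
  subset : I ⊆ Y
  zero_mem : (0 : X) ∈ I
  add_mem : ∀ {x y : X}, x ∈ I → y ∈ I → x + y ∈ I
  smul_mem : ∀ (c : ℝ) {x : X}, x ∈ I → c • x ∈ I
  solid : ∀ x ∈ Y, ∀ y ∈ I, 1/2 < F.μ (F.fabs x) (F.fabs y) → x ∈ I

/-- A decreasing net. -/
def Decreasing (F : FuzzyRiesz X) {ι : Type v} [Preorder ι] (y : ι → X) : Prop :=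
  ∀ a b : ι, a ≤ b → 1/2 < F.μ (y b) (y a)

/-- An increasing net. -/
def Increasing (F : FuzzyRiesz X) {ι : Type v} [Preorder ι] (x : ι → X) : Prop :=
  ∀ a b : ι, a ≤ b → 1/2 < F.μ (x a) (x b)

/-- The net `x` converges in fuzzy order to `l`: there is a net `y` over the same
index set with `μ(|x_α − l|, y_α) > 1/2` for all `α` and `y_α ↓ 0`. -/
def FuzzyOrderConv (F : FuzzyRiesz X) {ι : Type v} [Preorder ι] (x : ι → X) (l : X) : Prop :=
  ∃ y : ι → X, (∀ a, 1/2 < F.μ (F.fabs (x a - l)) (y a)) ∧ F.Decreasing y ∧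
    F.IsInf (Set.range y) 0

/-- Fuzzy order convergence relative to the subset `Y` (the dominating net lies in `Y`
and its infimum is computed in `Y`). -/
def FuzzyOrderConvIn (F : FuzzyRiesz X) (Y : Set X) {ι : Type v} [Preorder ι]
    (x : ι → X) (l : X) : Prop :=
  ∃ y : ι → X, (∀ a, y a ∈ Y) ∧ (∀ a, 1/2 < F.μ (F.fabs (x a - l)) (y a)) ∧ F.Decreasing y ∧
    F.IsInfIn Y (Set.range y) 0

/-- `S` is fuzzy σ-order closed: closed under fuzzy order limits of sequences in `S`. -/
def SigmaOrderClosed (F : FuzzyRiesz X) (S : Set X) : Prop :=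
  ∀ (x : ℕ → X) (l : X), (∀ n, x n ∈ S) → F.FuzzyOrderConv x l → l ∈ S

/-- `S` is fuzzy order closed: closed under fuzzy order limits of nets in `S`. -/
def OrderClosed (F : FuzzyRiesz X) (S : Set X) : Prop :=
  ∀ (ι : Type v) [Preorder ι] [Nonempty ι] [IsDirected ι (· ≤ ·)],
    ∀ (x : ι → X) (l : X), (∀ a, x a ∈ S) → F.FuzzyOrderConv x l → l ∈ S

/-- `S` is fuzzy order closed in the subspace `Y`. -/
def OrderClosedIn (F : FuzzyRiesz X) (Y S : Set X) : Prop :=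
  ∀ (ι : Type v) [Preorder ι] [Nonempty ι] [IsDirected ι (· ≤ ·)],
    ∀ (x : ι → X) (l : X), (∀ a, x a ∈ S) → l ∈ Y → F.FuzzyOrderConvIn Y x l → l ∈ S

/-- A fuzzy band: a fuzzy order closed fuzzy ideal. -/
def IsBand (F : FuzzyRiesz X) (B : Set X) : Prop := F.IsIdeal B ∧ OrderClosed.{v} F B

/-- A fuzzy band of the subspace `Y`. -/
def IsBandIn (F : FuzzyRiesz X) (Y B : Set X) : Prop := F.IsIdealIn Y B ∧ OrderClosedIn.{v} F Y B

/-- The disjoint complement `A^d = {x : |x| ∧ |y| = 0 for all y ∈ A}`. -/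
def dcomp (F : FuzzyRiesz X) (A : Set X) : Set X :=
  {x : X | ∀ y ∈ A, F.inf (F.fabs x) (F.fabs y) = 0}

/-- The algebraic sum of two subsets. -/
def sumSet (A B : Set X) : Set X := {z : X | ∃ a ∈ A, ∃ b ∈ B, z = a + b}

/-- `S` is fuzzy order dense in `X`. -/
def OrderDense (F : FuzzyRiesz X) (S : Set X) : Prop :=
  ∀ x : X, x ≠ 0 → F.Pos x → ∃ y ∈ S, y ≠ 0 ∧ 1/2 < F.μ y x

/-- `S` is fuzzy order dense in the subspace `Y`. -/
def OrderDenseIn (F : FuzzyRiesz X) (Y S : Set X) : Prop :=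
  ∀ x ∈ Y, x ≠ 0 → F.Pos x → ∃ y ∈ S, y ≠ 0 ∧ 1/2 < F.μ y x

/-- `x` is nonnegative: it is not the case that `μ(x,0) > 1/2`. -/
def Nonneg (F : FuzzyRiesz X) (x : X) : Prop := ¬ (1/2 < F.μ x 0)

/-- `X` is fuzzy Archimedean: for every nonzero nonnegative `x`, the set
`{λ • x : λ > 0}` has no upper bound. -/
def FuzzyArchimedean (F : FuzzyRiesz X) : Prop :=
  ∀ x : X, x ≠ 0 → F.Nonneg x →
    ¬ ∃ y : X, F.UpperBound {z : X | ∃ c : ℝ, 0 < c ∧ z = c • x} y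

/-- `X` is fuzzy Dedekind complete. -/
def DedekindComplete (F : FuzzyRiesz X) : Prop :=
  ∀ A : Set X, A.Nonempty → (∃ y, F.UpperBound A y) → ∃ z, F.IsSup A z

/-- `X` is fuzzy Dedekind σ-complete. -/
def DedekindSigmaComplete (F : FuzzyRiesz X) : Prop :=
  ∀ A : Set X, A.Nonempty → A.Countable →
    ((∃ y, F.UpperBound A y) → ∃ z, F.IsSup A z) ∧
    ((∃ y, F.LowerBound A y) → ∃ z, F.IsInf A z)

/-- `D` is directed to the right. -/
def DirectedRight (F : FuzzyRiesz X) (D : Set X) : Prop :=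
  ∀ E : Set X, E ⊆ D → E.Finite → ∃ d ∈ D, ∀ e ∈ E, 1/2 < F.μ e d

/-- `B` is a fuzzy projection band: a fuzzy band such that every `x ∈ X` decomposes
uniquely as `x = x₁ + x₂` with `x₁ ∈ B`, `x₂ ∈ B^d`. -/
def IsProjBand (F : FuzzyRiesz X) (B : Set X) : Prop :=
  IsBand.{v} F B ∧ ∀ x : X, ∃! p : X × X, p.1 ∈ B ∧ p.2 ∈ F.dcomp B ∧ x = p.1 + p.2

/-- There is an increasing net of elements of `S`, over some nonempty directed
preordered index set, whose supremum is `l`. -/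
def IncNetSup (F : FuzzyRiesz X) (S : Set X) (l : X) : Prop :=
  ∃ (ι : Type v) (r : ι → ι → Prop), Nonempty ι ∧ (∀ a, r a a) ∧
    (∀ a b c, r a b → r b c → r a c) ∧ (∀ a b, ∃ c, r a c ∧ r b c) ∧
    ∃ net : ι → X, (∀ a, net a ∈ S) ∧ (∀ a b, r a b → 1/2 < F.μ (net a) (net b)) ∧
      F.IsSup (Set.range net) l

end FuzzyRiesz

namespace FuzzyRiesz

variable {X : Type*} [AddCommGroup X] [Module ℝ X] {F : FuzzyRiesz X}

/-- The crisp order induced by the fuzzy order. -/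
def fle (F : FuzzyRiesz X) (x y : X) : Prop := 1/2 < F.μ x y

lemma fle_refl (x : X) : F.fle x x := by unfold fle; rw [F.refl]; norm_num

lemma fle_trans {x y z : X} (h1 : F.fle x y) (h2 : F.fle y z) : F.fle x z :=
  lt_of_lt_of_le (lt_min h1 h2) (F.trans x y z)

lemma fle_antisymm {x y : X} (h1 : F.fle x y) (h2 : F.fle y x) : x = y :=
  F.antisymm x y (by unfold fle at h1 h2; linarith)

lemma fle_add_right {x y : X} (h : F.fle x y) (z : X) : F.fle (x + z) (y + z) :=
  lt_of_lt_of_le h (F.add_compat x y z h)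

lemma fle_smul {x y : X} {c : ℝ} (hc : 0 ≤ c) (h : F.fle x y) : F.fle (c • x) (c • y) :=
  lt_of_lt_of_le h (F.smul_compat x y c hc h)

lemma fle_add {a b c d : X} (h1 : F.fle a b) (h2 : F.fle c d) : F.fle (a + c) (b + d) := by
  have h3 : F.fle (a + c) (b + c) := fle_add_right h1 c
  have h4 : F.fle (c + b) (d + b) := fle_add_right h2 b
  rw [add_comm c b, add_comm d b] at h4
  exact fle_trans h3 h4

lemma fle_neg {x y : X} (h : F.fle x y) : F.fle (-y) (-x) := by
  have h' := fle_add_right h (-x + -y)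
  have e1 : x + (-x + -y) = -y := by abel
  have e2 : y + (-x + -y) = -x := by abel
  rwa [e1, e2] at h'

lemma fle_sub_of_le_add {x y z : X} (h : F.fle x (y + z)) : F.fle (x - z) y := by
  have h' := fle_add_right h (-z)
  have e1 : x + -z = x - z := by abel
  have e2 : y + z + -z = y := by abel
  rwa [e1, e2] at h'

lemma fle_of_sub_le {x y z : X} (h : F.fle (x - z) y) : F.fle x (y + z) := by
  have h' := fle_add_right h z
  have e1 : x - z + z = x := by abel
  rwa [e1] at h'

lemma le_fabs (x : X) : F.fle x (F.fabs x) := F.le_sup_left x (-x)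

lemma neg_le_fabs (x : X) : F.fle (-x) (F.fabs x) := F.le_sup_right x (-x)

lemma fabs_nonneg (x : X) : F.fle 0 (F.fabs x) := by
  have h1 : F.fle (x + -x) (F.fabs x + F.fabs x) := fle_add (le_fabs x) (neg_le_fabs x)
  rw [add_neg_cancel] at h1
  have h2 := fle_smul (by norm_num : (0:ℝ) ≤ 1/2) h1
  rw [smul_zero] at h2
  have e : ((1:ℝ)/2) • (F.fabs x + F.fabs x) = F.fabs x := by
    rw [smul_add, ← add_smul]; norm_num
  rwa [e] at h2

lemma fabs_zero : F.fabs (0 : X) = 0 := by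
  refine fle_antisymm ?_ (fabs_nonneg 0)
  exact F.sup_le 0 (-0) 0 (fle_refl 0) (by rw [neg_zero]; exact fle_refl 0)

lemma fabs_neg (x : X) : F.fabs (-x) = F.fabs x := by
  have h1 : F.fle (F.fabs (-x)) (F.fabs x) :=
    F.sup_le (-x) (-(-x)) (F.fabs x) (neg_le_fabs x) (by rw [neg_neg]; exact le_fabs x)
  have h2 : F.fle (F.fabs x) (F.fabs (-x)) := by
    have hx : F.fle x (F.fabs (-x)) := by
      show F.fle x (F.sup (-x) (-(-x))); rw [neg_neg]; exact F.le_sup_right (-x) x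
    exact F.sup_le x (-x) (F.fabs (-x)) hx (le_fabs (-x))
  exact fle_antisymm h1 h2

lemma fabs_add_le (x y : X) : F.fle (F.fabs (x + y)) (F.fabs x + F.fabs y) := by
  have h1 : F.fle (x + y) (F.fabs x + F.fabs y) := fle_add (le_fabs x) (le_fabs y)
  have h2 : F.fle (-(x + y)) (F.fabs x + F.fabs y) := by
    have h := fle_add (F := F) (neg_le_fabs x) (neg_le_fabs y)
    have e : -x + -y = -(x + y) := by abel
    rwa [e] at h
  exact F.sup_le _ _ _ h1 h2

lemma fabs_smul_le (c : ℝ) (x : X) : F.fle (F.fabs (c • x)) (|c| • F.fabs x) := by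
  rcases le_total 0 c with hc | hc
  · rw [abs_of_nonneg hc]
    have h1 : F.fle (c • x) (c • F.fabs x) := fle_smul hc (le_fabs x)
    have h2 : F.fle (-(c • x)) (c • F.fabs x) := by
      have := fle_smul (F := F) hc (neg_le_fabs x)
      rwa [smul_neg] at this
    exact F.sup_le _ _ _ h1 h2
  · rw [abs_of_nonpos hc]
    have hc' : (0:ℝ) ≤ -c := by linarith
    have h1 : F.fle (c • x) ((-c) • F.fabs x) := by
      have := fle_smul (F := F) hc' (neg_le_fabs x)
      rwa [show (-c) • (-x) = c • x by rw [neg_smul, smul_neg, neg_neg]] at this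
    have h2 : F.fle (-(c • x)) ((-c) • F.fabs x) := by
      have := fle_smul (F := F) hc' (le_fabs x)
      rwa [show (-c) • x = -(c • x) by rw [neg_smul]] at this
    exact F.sup_le _ _ _ h1 h2

lemma fle_smul_smul {s t : ℝ} (_hs : 0 ≤ s) (hst : s ≤ t) {a : X} (ha : F.fle 0 a) :
    F.fle (s • a) (t • a) := by
  have h0 : F.fle 0 ((t - s) • a) := by
    have := fle_smul (by linarith : (0:ℝ) ≤ t - s) ha
    rwa [smul_zero] at this
  have h1 : F.fle (0 + s • a) ((t - s) • a + s • a) := fle_add_right h0 (s • a)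
  have e : (t - s) • a + s • a = t • a := by rw [← add_smul]; congr 1; ring
  rwa [zero_add, e] at h1

end FuzzyRiesz
universe u

/-- the disjoint complement of any subset of a fuzzy Riesz space
is a fuzzy band. -/
theorem dcomp_isBand {X : Type*} [AddCommGroup X] [Module ℝ X]
    (F : FuzzyRiesz X) (A : Set X) :
    FuzzyRiesz.IsBand.{u} F (F.dcomp A) := by
  open FuzzyRiesz in
  have hmem_iff : ∀ x : X, x ∈ F.dcomp A ↔ ∀ y ∈ A, F.inf (F.fabs x) (F.fabs y) = 0 :=
    fun x => Iff.rfl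
  constructor
  · refine ⟨?_, ?_, ?_, ?_⟩
    · -- zero_mem
      intro y hy
      rw [FuzzyRiesz.fabs_zero]
      exact FuzzyRiesz.fle_antisymm (F.inf_le_left 0 (F.fabs y))
        (F.le_inf _ _ _ (FuzzyRiesz.fle_refl 0) (FuzzyRiesz.fabs_nonneg y))
    · -- add_mem
      intro x x' hx hx' y hy
      set m := F.inf (F.fabs (x + x')) (F.fabs y) with hm
      have hm0 : F.fle 0 m :=
        F.le_inf _ _ _ (FuzzyRiesz.fabs_nonneg _) (FuzzyRiesz.fabs_nonneg _)
      have hmy : F.fle m (F.fabs y) := F.inf_le_right _ _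
      have h1 : F.fle m (F.fabs x + F.fabs x') :=
        FuzzyRiesz.fle_trans (F.inf_le_left _ _) (FuzzyRiesz.fabs_add_le x x')
      have h2 : F.fle (m - F.fabs x') (F.fabs x) := FuzzyRiesz.fle_sub_of_le_add h1
      have hneg : F.fle (-(F.fabs x')) 0 := by
        have := FuzzyRiesz.fle_neg (FuzzyRiesz.fabs_nonneg (F := F) x')
        rwa [neg_zero] at this
      have h3 : F.fle (m - F.fabs x') m := by
        have := FuzzyRiesz.fle_add (FuzzyRiesz.fle_refl (F := F) m) hneg
        rwa [add_zero, ← sub_eq_add_neg] at this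
      have h4 : F.fle (m - F.fabs x') (F.fabs y) := FuzzyRiesz.fle_trans h3 hmy
      have h5 : F.fle (m - F.fabs x') 0 := by
        have := F.le_inf (F.fabs x) (F.fabs y) _ h2 h4
        rwa [hx y hy] at this
      have h6 : F.fle m (F.fabs x') := by
        have := FuzzyRiesz.fle_of_sub_le h5
        rwa [zero_add] at this
      have h7 : F.fle m 0 := by
        have := F.le_inf (F.fabs x') (F.fabs y) _ h6 hmy
        rwa [hx' y hy] at this
      exact FuzzyRiesz.fle_antisymm h7 hm0
    · -- smul_mem
      intro c x hx y hy
      set m := F.inf (F.fabs (c • x)) (F.fabs y) with hm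
      have hm0 : F.fle 0 m :=
        F.le_inf _ _ _ (FuzzyRiesz.fabs_nonneg _) (FuzzyRiesz.fabs_nonneg _)
      have hmy : F.fle m (F.fabs y) := F.inf_le_right _ _
      set s : ℝ := |c| + 1 with hs
      have hs1 : (1:ℝ) ≤ s := by have := abs_nonneg c; rw [hs]; linarith
      have hs0 : (0:ℝ) < s := by positivity
      have h1 : F.fle m (s • F.fabs x) := by
        refine FuzzyRiesz.fle_trans (FuzzyRiesz.fle_trans (F.inf_le_left _ _)
          (FuzzyRiesz.fabs_smul_le c x)) ?_
        exact FuzzyRiesz.fle_smul_smul (abs_nonneg c) (by simp [hs]) (FuzzyRiesz.fabs_nonneg x)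
      have h2 : F.fle (s⁻¹ • m) (F.fabs x) := by
        have := FuzzyRiesz.fle_smul (inv_nonneg.mpr hs0.le) h1
        rwa [smul_smul, inv_mul_cancel₀ hs0.ne', one_smul] at this
      have h3 : F.fle (s⁻¹ • m) (F.fabs y) := by
        have ha := FuzzyRiesz.fle_smul (inv_nonneg.mpr hs0.le) hmy
        have hb : F.fle (s⁻¹ • F.fabs y) ((1:ℝ) • F.fabs y) :=
          FuzzyRiesz.fle_smul_smul (inv_nonneg.mpr hs0.le)
            (by rw [inv_eq_one_div, div_le_one hs0]; linarith) (FuzzyRiesz.fabs_nonneg y)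
        rw [one_smul] at hb
        exact FuzzyRiesz.fle_trans ha hb
      have h4 : F.fle (s⁻¹ • m) 0 := by
        have := F.le_inf (F.fabs x) (F.fabs y) _ h2 h3
        rwa [hx y hy] at this
      have h5 : F.fle m 0 := by
        have := FuzzyRiesz.fle_smul hs0.le h4
        rwa [smul_smul, mul_inv_cancel₀ hs0.ne', one_smul, smul_zero] at this
      exact FuzzyRiesz.fle_antisymm h5 hm0
    · -- solid
      intro x x' hle hx' y hy
      have hm0 : F.fle 0 (F.inf (F.fabs x) (F.fabs y)) :=
        F.le_inf _ _ _ (FuzzyRiesz.fabs_nonneg _) (FuzzyRiesz.fabs_nonneg _)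
      have h1 : F.fle (F.inf (F.fabs x) (F.fabs y)) (F.fabs x') :=
        FuzzyRiesz.fle_trans (F.inf_le_left _ _) hle
      have h2 : F.fle (F.inf (F.fabs x) (F.fabs y)) 0 := by
        have := F.le_inf (F.fabs x') (F.fabs y) _ h1 (F.inf_le_right _ _)
        rwa [hx' y hy] at this
      exact FuzzyRiesz.fle_antisymm h2 hm0
  · -- order closed
    rintro ι _ _ _ x l hmem ⟨w, hdom, hdec, hinf⟩
    intro y hy
    set m := F.inf (F.fabs l) (F.fabs y) with hm
    have hm0 : F.fle 0 m :=
      F.le_inf _ _ _ (FuzzyRiesz.fabs_nonneg _) (FuzzyRiesz.fabs_nonneg _)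
    have hmy : F.fle m (F.fabs y) := F.inf_le_right _ _
    have hlb : F.LowerBound (Set.range w) m := by
      rintro z ⟨a, rfl⟩
      have htri : F.fle (F.fabs l) (F.fabs (x a) + F.fabs (x a - l)) := by
        have h := FuzzyRiesz.fabs_add_le (F := F) (x a) (l - x a)
        rw [show x a + (l - x a) = l by abel,
          show l - x a = -(x a - l) by abel, FuzzyRiesz.fabs_neg] at h
        exact h
      have h1 : F.fle m (F.fabs (x a) + F.fabs (x a - l)) :=
        FuzzyRiesz.fle_trans (F.inf_le_left _ _) htri
      have h2 : F.fle (m - F.fabs (x a - l)) (F.fabs (x a)) :=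
        FuzzyRiesz.fle_sub_of_le_add h1
      have hneg : F.fle (-(F.fabs (x a - l))) 0 := by
        have := FuzzyRiesz.fle_neg (FuzzyRiesz.fabs_nonneg (F := F) (x a - l))
        rwa [neg_zero] at this
      have h3 : F.fle (m - F.fabs (x a - l)) m := by
        have := FuzzyRiesz.fle_add (FuzzyRiesz.fle_refl (F := F) m) hneg
        rwa [add_zero, ← sub_eq_add_neg] at this
      have h4 : F.fle (m - F.fabs (x a - l)) 0 := by
        have := F.le_inf (F.fabs (x a)) (F.fabs y) _ h2 (FuzzyRiesz.fle_trans h3 hmy)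
        rwa [hmem a y hy] at this
      have h5 : F.fle m (F.fabs (x a - l)) := by
        have := FuzzyRiesz.fle_of_sub_le h4
        rwa [zero_add] at this
      exact FuzzyRiesz.fle_trans h5 (hdom a)
    have hfin : F.fle m 0 := hinf.2 m hlb
    exact FuzzyRiesz.fle_antisymm hfin hm0
end

section
/- Let B₁ and B₂ be fuzzy ideals of a fuzzy Riesz space X with B₁ ∩ B₂ = {0} and X = B₁ + B₂ (so every x ∈ X decomposes uniquely as x = x₁ + x₂ with x₁ ∈ B₁, x₂ ∈ B₂). Then B₁ and B₂ are fuzzy bands satisfying B₁ = B₂^d and B₂ = B₁^d; in particular B₁ = B₁^{dd} and B₂ = B₂^{dd}. -/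
section Aux

variable {X : Type*} [AddCommGroup X] [Module ℝ X]

/-- The crisp order induced by the fuzzy order. -/
def fle (F : FuzzyRiesz X) (x y : X) : Prop := 1/2 < F.μ x y

variable {F : FuzzyRiesz X}

lemma fle_refl (x : X) : fle F x x := by unfold fle; rw [F.refl]; norm_num

lemma fle_trans {x y z : X} (h1 : fle F x y) (h2 : fle F y z) : fle F x z :=
  lt_of_lt_of_le (lt_min h1 h2) (F.trans x y z)

lemma fle_antisymm {x y : X} (h1 : fle F x y) (h2 : fle F y x) : x = y := by
  apply F.antisymm x y
  unfold fle at h1 h2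
  linarith

lemma fle_add_right {x y : X} (z : X) (h : fle F x y) : fle F (x + z) (y + z) :=
  lt_of_lt_of_le h (F.add_compat x y z h)

lemma fle_add {a b c d : X} (h1 : fle F a b) (h2 : fle F c d) : fle F (a + c) (b + d) := by
  have h3 := fle_add_right c h1
  have h4 := fle_add_right b h2
  rw [add_comm c b, add_comm d b] at h4
  exact fle_trans h3 h4

lemma fle_neg {x y : X} (h : fle F x y) : fle F (-y) (-x) := by
  have h2 := fle_add_right (-x + -y) h
  have e1 : x + (-x + -y) = -y := by abel
  have e2 : y + (-x + -y) = -x := by abel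
  rwa [e1, e2] at h2

lemma fle_smul {x y : X} {c : ℝ} (hc : 0 ≤ c) (h : fle F x y) : fle F (c • x) (c • y) :=
  lt_of_lt_of_le h (F.smul_compat x y c hc h)

lemma abs_nonneg' (x : X) : fle F 0 (F.fabs x) := by
  have h1 : fle F x (F.fabs x) := F.le_sup_left x (-x)
  have h2 : fle F (-x) (F.fabs x) := F.le_sup_right x (-x)
  have h3 := fle_add h1 h2
  have e : x + -x = (0:X) := by abel
  rw [e] at h3
  have h4 := fle_smul (c := (1/2 : ℝ)) (by norm_num) h3
  rw [smul_zero] at h4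
  have e2 : (1/2 : ℝ) • (F.fabs x + F.fabs x) = F.fabs x := by
    rw [smul_add, ← add_smul]; norm_num
  rwa [e2] at h4

lemma neg_nonpos' {x : X} (h : fle F 0 x) : fle F (-x) 0 := by
  have h2 := fle_neg h; rwa [neg_zero] at h2

lemma abs_of_nonneg' {x : X} (h : fle F 0 x) : F.fabs x = x :=
  fle_antisymm (F.sup_le x (-x) x (fle_refl x) (fle_trans (neg_nonpos' h) h))
    (F.le_sup_left x (-x))

lemma sup_comm' (x y : X) : F.sup x y = F.sup y x :=
  fle_antisymm (F.sup_le x y _ (F.le_sup_right y x) (F.le_sup_left y x))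
    (F.sup_le y x _ (F.le_sup_right x y) (F.le_sup_left x y))

lemma abs_neg' (x : X) : F.fabs (-x) = F.fabs x := by
  unfold FuzzyRiesz.fabs; rw [neg_neg, sup_comm']

lemma fabs_add' (x y : X) : fle F (F.fabs (x + y)) (F.fabs x + F.fabs y) := by
  apply F.sup_le
  · exact fle_add (F.le_sup_left x (-x)) (F.le_sup_left y (-y))
  · have h := fle_add (F.le_sup_right x (-x)) (F.le_sup_right y (-y))
    have e : -x + -y = -(x + y) := by abel
    rwa [e] at h

lemma inf_mono' {a b a' b' : X} (h1 : fle F a a') (h2 : fle F b b') :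
    fle F (F.inf a b) (F.inf a' b') :=
  F.le_inf _ _ _ (fle_trans (F.inf_le_left a b) h1) (fle_trans (F.inf_le_right a b) h2)

lemma add_inf' (a b c : X) : F.inf a b + c = F.inf (a + c) (b + c) := by
  apply fle_antisymm
  · exact F.le_inf _ _ _ (fle_add_right c (F.inf_le_left a b))
      (fle_add_right c (F.inf_le_right a b))
  · have h1 : fle F (F.inf (a+c) (b+c) + -c) a := by
      have h := fle_add_right (-c) (F.inf_le_left (a+c) (b+c))
      have e : a + c + -c = a := by abel
      rwa [e] at h
    have h2 : fle F (F.inf (a+c) (b+c) + -c) b := by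
      have h := fle_add_right (-c) (F.inf_le_right (a+c) (b+c))
      have e : b + c + -c = b := by abel
      rwa [e] at h
    have h3 := fle_add_right c (F.le_inf _ _ _ h1 h2)
    have e : F.inf (a+c) (b+c) + -c + c = F.inf (a+c) (b+c) := by abel
    rwa [e] at h3

lemma inf_subadd' {u v w : X} (hu : fle F 0 u) (hv : fle F 0 v) (hw : fle F 0 w) :
    fle F (F.inf (u + v) w) (F.inf u w + F.inf v w) := by
  rw [add_inf' u w (F.inf v w)]
  apply F.le_inf
  · have e : u + F.inf v w = F.inf (v + u) (w + u) := by
      rw [add_comm]; exact add_inf' v w u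
    rw [e]
    apply F.le_inf
    · rw [add_comm v u]; exact F.inf_le_left (u+v) w
    · refine fle_trans (F.inf_le_right (u+v) w) ?_
      have h := fle_add_right w hu
      rw [zero_add, add_comm] at h
      exact h
  · have e : w + F.inf v w = F.inf (v + w) (w + w) := by
      rw [add_comm]; exact add_inf' v w w
    rw [e]
    apply F.le_inf
    · refine fle_trans (F.inf_le_right (u+v) w) ?_
      have h := fle_add_right w hv
      rwa [zero_add] at h
    · refine fle_trans (F.inf_le_right (u+v) w) ?_
      have h := fle_add_right w hw
      rwa [zero_add] at h

lemma abs_eq_zero' {x : X} (h : F.fabs x = 0) : x = 0 := by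
  have h1 : fle F x 0 := by rw [← h]; exact F.le_sup_left x (-x)
  have h2 : fle F (-x) 0 := by rw [← h]; exact F.le_sup_right x (-x)
  have h3 := fle_neg h2
  rw [neg_neg, neg_zero] at h3
  exact fle_antisymm h1 h3

lemma pair_disjoint (F : FuzzyRiesz X) {B₁ B₂ : Set X} (h₁ : F.IsIdeal B₁)
    (h₂ : F.IsIdeal B₂) (hcap : B₁ ∩ B₂ = {0}) {a b : X} (ha : a ∈ B₁) (hb : b ∈ B₂) :
    F.inf (F.fabs a) (F.fabs b) = 0 := by
  set z := F.inf (F.fabs a) (F.fabs b) with hz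
  have hz0 : fle F 0 z := F.le_inf _ _ _ (abs_nonneg' a) (abs_nonneg' b)
  have hzz : F.fabs z = z := abs_of_nonneg' hz0
  have hz1 : z ∈ B₁ := h₁.solid z a (by rw [hzz]; exact F.inf_le_left _ _) ha
  have hz2 : z ∈ B₂ := h₂.solid z b (by rw [hzz]; exact F.inf_le_right _ _) hb
  have hmem : z ∈ B₁ ∩ B₂ := ⟨hz1, hz2⟩
  rw [hcap] at hmem
  exact hmem

lemma eq_dcomp (F : FuzzyRiesz X) {B₁ B₂ : Set X} (h₁ : F.IsIdeal B₁)
    (h₂ : F.IsIdeal B₂) (hcap : B₁ ∩ B₂ = {0})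
    (hsum : FuzzyRiesz.sumSet B₁ B₂ = Set.univ) : B₁ = F.dcomp B₂ := by
  ext x
  constructor
  · intro hx y hy
    exact pair_disjoint F h₁ h₂ hcap hx hy
  · intro hx
    have hxu : x ∈ FuzzyRiesz.sumSet B₁ B₂ := by rw [hsum]; trivial
    obtain ⟨a, ha, b, hb, rfl⟩ := hxu
    have hdx : F.inf (F.fabs (a + b)) (F.fabs b) = 0 := hx b hb
    have hda : F.inf (F.fabs a) (F.fabs b) = 0 := pair_disjoint F h₁ h₂ hcap ha hb
    have htri : fle F (F.fabs b) (F.fabs (a + b) + F.fabs a) := by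
      have h := fabs_add' (F := F) (a + b) (-a)
      have e : a + b + -a = b := by abel
      rw [e, abs_neg'] at h
      exact h
    have hb0 : b = 0 := by
      apply abs_eq_zero'
      have h1 : fle F (F.fabs b) (F.inf (F.fabs (a+b) + F.fabs a) (F.fabs b)) :=
        F.le_inf _ _ _ htri (fle_refl _)
      have h2 := inf_subadd' (F := F) (abs_nonneg' (a+b)) (abs_nonneg' a) (abs_nonneg' b)
      rw [hdx, hda, add_zero] at h2
      exact fle_antisymm (fle_trans h1 h2) (abs_nonneg' b)
    rw [hb0, add_zero]
    exact ha

lemma dcomp_orderClosed.{w} (F : FuzzyRiesz X) (A : Set X) :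
    FuzzyRiesz.OrderClosed.{w} F (F.dcomp A) := by
  intro ι _ _ _ x l hx hconv
  obtain ⟨y, hdom, hdec, hinf⟩ := hconv
  intro w hw
  set z := F.inf (F.fabs l) (F.fabs w) with hzdef
  have hz0 : fle F 0 z := F.le_inf _ _ _ (abs_nonneg' l) (abs_nonneg' w)
  have hub : ∀ a, fle F z (y a) := by
    intro a
    have htri : fle F (F.fabs l) (F.fabs (x a) + F.fabs (x a - l)) := by
      have h := fabs_add' (F := F) (x a) (l - x a)
      have e : x a + (l - x a) = l := by abel
      rw [e] at h
      have e2 : l - x a = -(x a - l) := by abel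
      rw [e2, abs_neg'] at h
      exact h
    have h1 : fle F z (F.inf (F.fabs (x a) + F.fabs (x a - l)) (F.fabs w)) :=
      inf_mono' htri (fle_refl _)
    have h2 := inf_subadd' (F := F) (abs_nonneg' (x a)) (abs_nonneg' (x a - l)) (abs_nonneg' w)
    rw [hx a w hw, zero_add] at h2
    have h4 : fle F z (F.fabs (x a - l)) :=
      fle_trans (fle_trans h1 h2) (F.inf_le_left _ _)
    exact fle_trans h4 (hdom a)
  have hlb : F.LowerBound (Set.range y) z := by
    rintro _ ⟨a, rfl⟩
    exact hub a
  exact fle_antisymm (hinf.2 z hlb) hz0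

end Aux


universe u

/-- if `X = B₁ ⊕ B₂` for fuzzy ideals `B₁, B₂`, then `B₁` and `B₂`
are fuzzy bands with `B₁ = B₂^d`, `B₂ = B₁^d`, `B₁ = B₁^{dd}` and `B₂ = B₂^{dd}`. -/
theorem directSum_ideals_are_bands {X : Type*} [AddCommGroup X] [Module ℝ X]
    (F : FuzzyRiesz X) (B₁ B₂ : Set X) (h₁ : F.IsIdeal B₁) (h₂ : F.IsIdeal B₂)
    (hcap : B₁ ∩ B₂ = {0}) (hsum : FuzzyRiesz.sumSet B₁ B₂ = Set.univ) :
    FuzzyRiesz.IsBand.{u} F B₁ ∧ FuzzyRiesz.IsBand.{u} F B₂ ∧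
    B₁ = F.dcomp B₂ ∧ B₂ = F.dcomp B₁ ∧
    B₁ = F.dcomp (F.dcomp B₁) ∧ B₂ = F.dcomp (F.dcomp B₂) := by
  have hcap' : B₂ ∩ B₁ = {0} := by rw [Set.inter_comm]; exact hcap
  have hsum' : FuzzyRiesz.sumSet B₂ B₁ = Set.univ := by
    rw [← hsum]
    ext x
    constructor <;> rintro ⟨a, ha, b, hb, rfl⟩ <;> exact ⟨b, hb, a, ha, add_comm a b⟩
  have e1 : B₁ = F.dcomp B₂ := eq_dcomp F h₁ h₂ hcap hsum
  have e2 : B₂ = F.dcomp B₁ := eq_dcomp F h₂ h₁ hcap' hsum'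
  refine ⟨⟨h₁, ?_⟩, ⟨h₂, ?_⟩, e1, e2, ?_, ?_⟩
  · rw [e1]; exact dcomp_orderClosed F B₂
  · rw [e2]; exact dcomp_orderClosed F B₁
  · rw [← e2]; exact e1
  · rw [← e1]; exact e2
end

section
/- Let D be a nonempty subset of a fuzzy Riesz space X. Then D^d = I_D^d = B_D^d, where I_D is the fuzzy ideal generated by D and B_D is the fuzzy band generated by D. -/
universe u

/-- `D^d = I_D^d = B_D^d` where `I_D` and `B_D` are the fuzzy ideal
and the fuzzy band generated by a nonempty set `D`. -/
theorem dcomp_genIdeal_genBand {X : Type*} [AddCommGroup X] [Module ℝ X]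
    (F : FuzzyRiesz X) (D : Set X) (hD : D.Nonempty) (ID BD : Set X)
    (hID : F.IsIdeal ID ∧ D ⊆ ID ∧ ∀ J : Set X, F.IsIdeal J → D ⊆ J → ID ⊆ J)
    (hBD : FuzzyRiesz.IsBand.{u} F BD ∧ D ⊆ BD ∧
      ∀ B : Set X, FuzzyRiesz.IsBand.{u} F B → D ⊆ B → BD ⊆ B) :
    F.dcomp D = F.dcomp ID ∧ F.dcomp D = F.dcomp BD := by
  classical
  have htrans : ∀ a b c : X, 1/2 < F.μ a b → 1/2 < F.μ b c → 1/2 < F.μ a c := by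
    intro a b c h1 h2
    exact lt_of_lt_of_le (lt_min h1 h2) (F.trans a b c)
  letI : PartialOrder X :=
    { le := fun a b => 1/2 < F.μ a b
      le_refl := fun a => by show 1/2 < F.μ a a; rw [F.refl]; norm_num
      le_trans := htrans
      le_antisymm := fun a b h1 h2 => by
        have h1' : 1/2 < F.μ a b := h1
        have h2' : 1/2 < F.μ b a := h2
        exact F.antisymm a b (by linarith) }
  letI : Lattice X :=
    { sup := F.sup
      le_sup_left := F.le_sup_left
      le_sup_right := F.le_sup_right
      sup_le := fun a b c h1 h2 => F.sup_le a b c h1 h2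
      inf := F.inf
      inf_le_left := F.inf_le_left
      inf_le_right := F.inf_le_right
      le_inf := fun a b c h1 h2 => F.le_inf b c a h1 h2 }
  letI : AddLeftMono X := ⟨by
    intro c a b h
    show 1/2 < F.μ (c + a) (c + b)
    rw [add_comm c a, add_comm c b]
    exact lt_of_lt_of_le h (F.add_compat a b c h)⟩
  -- basic facts relating F's operations to the instance operations
  have hfabs : ∀ a : X, F.fabs a = |a| := fun a => rfl
  have hinfF : ∀ a b : X, F.inf a b = a ⊓ b := fun a b => rfl
  have hmu_iff : ∀ a b : X, (1/2 < F.μ a b) = (a ≤ b) := fun a b => rfl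
  -- scalar multiplication lemmas
  have hsmul_le : ∀ (c : ℝ), 0 ≤ c → ∀ a b : X, a ≤ b → c • a ≤ c • b := by
    intro c hc a b h
    exact lt_of_lt_of_le h (F.smul_compat a b c hc h)
  have hsmul_nonneg : ∀ (c : ℝ), 0 ≤ c → ∀ a : X, 0 ≤ a → (0 : X) ≤ c • a := by
    intro c hc a ha
    have := hsmul_le c hc 0 a ha
    rwa [smul_zero] at this
  have hsmul_inf : ∀ (c : ℝ), 0 < c → ∀ a b : X, c • (a ⊓ b) = (c • a) ⊓ (c • b) := by
    intro c hc a b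
    apply le_antisymm
    · exact le_inf (hsmul_le c hc.le _ _ inf_le_left) (hsmul_le c hc.le _ _ inf_le_right)
    · have h1 : c⁻¹ • ((c • a) ⊓ (c • b)) ≤ a ⊓ b := by
        apply le_inf
        · have := hsmul_le c⁻¹ (by positivity) _ _ (inf_le_left (a := c • a) (b := c • b))
          rwa [inv_smul_smul₀ hc.ne'] at this
        · have := hsmul_le c⁻¹ (by positivity) _ _ (inf_le_right (a := c • a) (b := c • b))
          rwa [inv_smul_smul₀ hc.ne'] at this
      have := hsmul_le c hc.le _ _ h1
      rwa [smul_inv_smul₀ hc.ne'] at this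
  have hsmul_sup : ∀ (c : ℝ), 0 < c → ∀ a b : X, c • (a ⊔ b) = (c • a) ⊔ (c • b) := by
    intro c hc a b
    apply le_antisymm
    · have h1 : c⁻¹ • ((c • a) ⊔ (c • b)) ≥ a ⊔ b := by
        apply sup_le
        · have := hsmul_le c⁻¹ (by positivity) _ _ (le_sup_left (a := c • a) (b := c • b))
          rwa [inv_smul_smul₀ hc.ne'] at this
        · have := hsmul_le c⁻¹ (by positivity) _ _ (le_sup_right (a := c • a) (b := c • b))
          rwa [inv_smul_smul₀ hc.ne'] at this
      have := hsmul_le c hc.le _ _ h1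
      rwa [smul_inv_smul₀ hc.ne'] at this
    · exact sup_le (hsmul_le c hc.le _ _ le_sup_left) (hsmul_le c hc.le _ _ le_sup_right)
  have habs_smul : ∀ (c : ℝ) (a : X), |c • a| = |c| • |a| := by
    have hpos : ∀ (c : ℝ), 0 < c → ∀ a : X, |c • a| = c • |a| := by
      intro c hc a
      show (c • a) ⊔ (-(c • a)) = c • (a ⊔ -a)
      rw [hsmul_sup c hc a (-a), smul_neg]
    intro c a
    rcases lt_trichotomy c 0 with h | h | h
    · have h1 : c • a = -((-c) • a) := by rw [neg_smul, neg_neg]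
      rw [h1, abs_neg, hpos (-c) (by linarith) a, abs_of_neg h]
    · subst h; simp only [zero_smul, abs_zero, smul_zero]
    · rw [hpos c h a, abs_of_pos h]
  -- key inequality : a ⊓ (b + c) ≤ (a ⊓ b) + (a ⊓ c) for nonneg a b c
  have hinf_add : ∀ a b c : X, 0 ≤ a → 0 ≤ b → 0 ≤ c →
      a ⊓ (b + c) ≤ (a ⊓ b) + (a ⊓ c) := by
    intro a b c ha hb hc
    have h1 : (a ⊓ b) + (a ⊓ c) = ((a + a) ⊓ (a + c)) ⊓ ((b + a) ⊓ (b + c)) := by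
      rw [inf_add a b (a ⊓ c), add_inf a c a, add_inf a c b]
    rw [h1]
    refine le_inf (le_inf ?_ ?_) (le_inf ?_ ?_)
    · exact le_trans inf_le_left (le_add_of_nonneg_right ha)
    · exact le_trans inf_le_left (le_add_of_nonneg_right hc)
    · exact le_trans inf_le_left (le_add_of_nonneg_left hb)
    · exact inf_le_right
  -- the main step: x ∈ D^d → x ∈ BD^d
  have key : ∀ x ∈ F.dcomp D, x ∈ F.dcomp BD := by
    intro x hx
    set A : Set X := {y : X | |x| ⊓ |y| = 0} with hA
    have hmemA : ∀ y : X, y ∈ A ↔ |x| ⊓ |y| = 0 := fun y => Iff.rfl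
    have hnn : ∀ y : X, (0 : X) ≤ |x| ⊓ |y| := fun y => le_inf (abs_nonneg x) (abs_nonneg y)
    have hDA : D ⊆ A := by
      intro y hy
      have := hx y hy
      rwa [hinfF, hfabs, hfabs] at this
    have hidealA : F.IsIdeal A := by
      constructor
      · show |x| ⊓ |(0 : X)| = 0
        rw [abs_zero]
        exact inf_eq_right.2 (abs_nonneg x)
      · intro a b haA hbA
        show |x| ⊓ |a + b| = 0
        apply le_antisymm _ (hnn _)
        calc |x| ⊓ |a + b| ≤ |x| ⊓ (|a| + |b|) :=
              inf_le_inf_left _ (abs_add_le a b)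
          _ ≤ (|x| ⊓ |a|) + (|x| ⊓ |b|) :=
              hinf_add _ _ _ (abs_nonneg x) (abs_nonneg a) (abs_nonneg b)
          _ = 0 := by rw [haA, hbA, add_zero]
      · intro c a haA
        show |x| ⊓ |c • a| = 0
        apply le_antisymm _ (hnn _)
        set s : ℝ := max |c| 1 with hs
        have hs1 : (1 : ℝ) ≤ s := le_max_right _ _
        have hspos : (0 : ℝ) < s := lt_of_lt_of_le one_pos hs1
        have h1 : |c • a| ≤ s • |a| := by
          have h2 : (0 : X) ≤ (s - |c|) • |a| :=
            hsmul_nonneg _ (by simp [hs, sub_nonneg, le_max_left]) _ (abs_nonneg a)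
          rw [sub_smul] at h2
          rw [habs_smul]
          exact sub_nonneg.1 h2
        have h3 : |x| ≤ s • |x| := by
          have h4 : (0 : X) ≤ (s - 1) • |x| :=
            hsmul_nonneg _ (by linarith) _ (abs_nonneg x)
          rw [sub_smul, one_smul] at h4
          exact sub_nonneg.1 h4
        calc |x| ⊓ |c • a| ≤ (s • |x|) ⊓ (s • |a|) := inf_le_inf h3 h1
          _ = s • (|x| ⊓ |a|) := (hsmul_inf s hspos _ _).symm
          _ = 0 := by rw [show |x| ⊓ |a| = 0 from haA, smul_zero]
      · intro a b hab hbA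
        show |x| ⊓ |a| = 0
        apply le_antisymm _ (hnn _)
        have h1 : |a| ≤ |b| := by rwa [hmu_iff, hfabs, hfabs] at hab
        calc |x| ⊓ |a| ≤ |x| ⊓ |b| := inf_le_inf_left _ h1
          _ = 0 := hbA
    have hclosedA : FuzzyRiesz.OrderClosed.{u} F A := by
      intro ι _ _ _ n l hn hconv
      obtain ⟨z, hzd, hzdec, hzinf⟩ := hconv
      set w : X := |x| ⊓ |l| with hw
      have hwz : ∀ a : ι, w ≤ z a := by
        intro a
        have h0a : (0 : X) ≤ z a := hzinf.1 _ ⟨a, rfl⟩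
        have hnl : |l - n a| ≤ z a := by
          rw [abs_sub_comm]
          have := hzd a
          rwa [hmu_iff, hfabs] at this
        have h1 : |l| ≤ |n a| + z a := by
          have h2 := abs_add_le (n a) (l - n a)
          have h3 : n a + (l - n a) = l := by abel
          rw [h3] at h2
          exact le_trans h2 (add_le_add le_rfl hnl)
        calc w ≤ |x| ⊓ (|n a| + z a) := inf_le_inf_left _ h1
          _ ≤ (|x| ⊓ |n a|) + (|x| ⊓ z a) :=
            hinf_add _ _ _ (abs_nonneg x) (abs_nonneg (n a)) h0a
          _ = |x| ⊓ z a := by rw [show |x| ⊓ |n a| = 0 from hn a, zero_add]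
          _ ≤ z a := inf_le_right
      have hw0 : w ≤ 0 := by
        apply hzinf.2 w
        intro v hv
        obtain ⟨a, rfl⟩ := hv
        exact hwz a
      exact le_antisymm hw0 (hnn l)
    have hBDA : BD ⊆ A := hBD.2.2 A ⟨hidealA, hclosedA⟩ hDA
    intro y hy
    rw [hinfF, hfabs, hfabs]
    exact hBDA hy
  -- antitonicity of dcomp
  have hanti : ∀ S T : Set X, S ⊆ T → F.dcomp T ⊆ F.dcomp S := by
    intro S T hST v hv y hy
    exact hv y (hST hy)
  have hIB : ID ⊆ BD := hID.2.2 BD hBD.1.1 hBD.2.1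
  constructor
  · apply Set.Subset.antisymm
    · intro v hv
      exact hanti ID BD hIB (key v hv)
    · exact hanti D ID hID.2.1
  · exact Set.Subset.antisymm key (hanti D BD hBD.2.1)
end

section
/- If X is a fuzzy Dedekind complete Riesz space, then X is fuzzy Archimedean. -/
/-- a fuzzy Dedekind complete Riesz space is fuzzy Archimedean. -/
theorem dedekindComplete_archimedean {X : Type*} [AddCommGroup X] [Module ℝ X]
    (F : FuzzyRiesz X) (h : F.DedekindComplete) : F.FuzzyArchimedean := by
  rintro x hx hnn ⟨y, hy⟩
  set A : Set X := {z : X | ∃ c : ℝ, 0 < c ∧ z = c • x} with hA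
  obtain ⟨z, hzub, hzle⟩ := h A ⟨x, 1, one_pos, (one_smul ℝ x).symm⟩ ⟨y, hy⟩
  have hub' : F.UpperBound A (z - x) := by
    rintro w ⟨c, hc, rfl⟩
    have h1 : ((c + 1) • x) ∈ A := ⟨c + 1, by linarith, rfl⟩
    have h2 := hzub _ h1
    have h3 := F.add_compat _ _ (-x) h2
    have he1 : (c + 1) • x + -x = c • x := by
      rw [add_smul, one_smul]; abel
    have he2 : z + -x = z - x := by abel
    rw [he1, he2] at h3
    exact lt_of_lt_of_le h2 h3
  have h4 := hzle _ hub'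
  have h5 := F.add_compat _ _ (x - z) h4
  have he1 : z + (x - z) = x := by abel
  have he2 : z - x + (x - z) = 0 := by abel
  rw [he1, he2] at h5
  exact hnn (lt_of_lt_of_le h4 h5)
end

section
/- Let X be a fuzzy Riesz space. Then: (i) X is fuzzy Dedekind complete if and only if every nonempty subset of X⁺ that is directed to the right and has an upper bound has a supremum; (ii) X is fuzzy Dedekind σ-complete if and only if every increasing sequence in X⁺ that has an upper bound has a supremum. -/
namespace FuzzyRiesz

section Aux

variable {X : Type*} [AddCommGroup X] [Module ℝ X] (F : FuzzyRiesz X)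

/-- The crisp order associated to the fuzzy order. -/
def Le (x y : X) : Prop := 1/2 < F.μ x y

variable {F}

lemma le_refl'' (x : X) : F.Le x x := by
  unfold Le; rw [F.refl]; norm_num

lemma le_trans'' {x y z : X} (h1 : F.Le x y) (h2 : F.Le y z) : F.Le x z :=
  lt_of_lt_of_le (lt_min h1 h2) (F.trans x y z)

lemma add_le'' {x y : X} (h : F.Le x y) (z : X) : F.Le (x + z) (y + z) :=
  lt_of_lt_of_le h (F.add_compat x y z h)

lemma neg_le'' {x y : X} (h : F.Le x y) : F.Le (-y) (-x) := by
  have := add_le'' h (-x + -y)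
  rwa [show x + (-x + -y) = -y by abel, show y + (-x + -y) = -x by abel] at this

variable (F) in
/-- Closure of a set under finite (binary) suprema. -/
inductive SupClosure (A : Set X) : X → Prop
  | base {a : X} : a ∈ A → SupClosure A a
  | sup {x y : X} : SupClosure A x → SupClosure A y → SupClosure A (F.sup x y)

lemma supClosure_le {A : Set X} {u : X} (hu : F.UpperBound A u) :
    ∀ {x : X}, SupClosure F A x → F.Le x u := by
  intro x h
  induction h with
  | base ha => exact hu _ ha
  | sup hx hy ihx ihy => exact F.sup_le _ _ _ ihx ihy

lemma supClosure_directed {A : Set X} {a₀ : X} (ha₀ : a₀ ∈ A) {E : Set X}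
    (hE : E.Finite) (hEsub : E ⊆ {x | SupClosure F A x}) :
    ∃ d, SupClosure F A d ∧ ∀ e ∈ E, F.Le e d := by
  revert hEsub
  refine Set.Finite.induction_on (motive := fun E _ => E ⊆ {x | SupClosure F A x} →
    ∃ d, SupClosure F A d ∧ ∀ e ∈ E, F.Le e d) E hE ?_ ?_
  · exact fun _ => ⟨a₀, .base ha₀, fun e he => absurd he (Set.notMem_empty e)⟩
  · intro a s _ _ ih hEsub
    obtain ⟨d, hd, hdle⟩ := ih (fun x hx => hEsub (Set.mem_insert_of_mem a hx))
    have haC : SupClosure F A a := hEsub (Set.mem_insert a s)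
    refine ⟨F.sup a d, .sup haC hd, ?_⟩
    intro e he
    rcases Set.mem_insert_iff.1 he with rfl | he
    · exact F.le_sup_left _ _
    · exact le_trans'' (hdle e he) (F.le_sup_right _ _)

lemma isSup_shift_back {B : Set X} {v z : X}
    (h : F.IsSup ((fun t => t + v) '' B) z) : F.IsSup B (z + -v) := by
  constructor
  · intro x hx
    have hx' : F.Le (x + v) z := h.1 _ ⟨x, hx, rfl⟩
    have := add_le'' hx' (-v)
    rwa [add_neg_cancel_right] at this
  · intro u hu
    have hu' : F.UpperBound ((fun t => t + v) '' B) (u + v) := by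
      rintro _ ⟨x, hx, rfl⟩
      exact add_le'' (hu x hx) v
    have := add_le'' (h.2 _ hu') (-v)
    rwa [add_neg_cancel_right] at this

/-- Key lemma: every nonempty countable bounded-above set has a supremum, provided
every bounded increasing positive sequence has one. -/
lemma key_countable_sup
    (hseq : ∀ x : ℕ → X, (∀ n, F.Pos (x n)) → F.Increasing x →
      (∃ y, F.UpperBound (Set.range x) y) → ∃ z, F.IsSup (Set.range x) z)
    (A : Set X) (hne : A.Nonempty) (hct : A.Countable)
    (hub : ∃ y, F.UpperBound A y) : ∃ z, F.IsSup A z := by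
  obtain ⟨y₀, hy₀⟩ := hub
  obtain ⟨a, rfl⟩ := hct.exists_eq_range hne
  let b : ℕ → X := fun n => Nat.rec (a 0) (fun n bn => F.sup bn (a (n + 1))) n
  have hb0 : b 0 = a 0 := rfl
  have hstep : ∀ n, F.Le (b n) (b (n + 1)) := fun n => F.le_sup_left _ _
  have hmono : ∀ m n, m ≤ n → F.Le (b m) (b n) := by
    intro m n hmn
    induction n, hmn using Nat.le_induction with
    | base => exact le_refl'' _
    | succ n hmn ih => exact le_trans'' ih (hstep n)
  have ha_le_b : ∀ n, F.Le (a n) (b n) := by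
    intro n
    cases n with
    | zero => exact le_refl'' _
    | succ n => exact F.le_sup_right _ _
  have hb_le : ∀ u, F.UpperBound (Set.range a) u → ∀ n, F.Le (b n) u := by
    intro u hu n
    induction n with
    | zero => exact hu _ ⟨0, rfl⟩
    | succ n ih => exact F.sup_le _ _ _ ih (hu _ ⟨n + 1, rfl⟩)
  obtain ⟨z, hz⟩ := hseq (fun n => b n + -(a 0))
    (by
      intro n
      have := add_le'' (hmono 0 n (Nat.zero_le n)) (-(a 0))
      rwa [show b 0 + -(a 0) = 0 by rw [hb0]; abel] at this)
    (fun m n hmn => add_le'' (hmono m n hmn) _)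
    ⟨y₀ + -(a 0), by rintro _ ⟨n, rfl⟩; exact add_le'' (hb_le y₀ hy₀ n) _⟩
  have hrange : Set.range (fun n => b n + -(a 0)) = (fun t => t + -(a 0)) '' Set.range b :=
    Set.range_comp (fun t => t + -(a 0)) b
  rw [hrange] at hz
  have hz' := isSup_shift_back hz
  rw [neg_neg] at hz'
  refine ⟨z + a 0, ?_, ?_⟩
  · rintro _ ⟨n, rfl⟩
    exact le_trans'' (ha_le_b n) (hz'.1 _ ⟨n, rfl⟩)
  · intro u hu
    exact hz'.2 u (by rintro _ ⟨n, rfl⟩; exact hb_le u hu n)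

end Aux

end FuzzyRiesz

/-- (i) `X` is fuzzy Dedekind complete iff every nonempty subset of `X⁺`
that is directed to the right and bounded above has a supremum; (ii) `X` is fuzzy
Dedekind σ-complete iff every increasing sequence in `X⁺` bounded above has a supremum. -/
theorem dedekindComplete_iff {X : Type*} [AddCommGroup X] [Module ℝ X]
    (F : FuzzyRiesz X) :
    (F.DedekindComplete ↔
      ∀ D : Set X, D.Nonempty → D ⊆ {x : X | F.Pos x} → F.DirectedRight D →
        (∃ y, F.UpperBound D y) → ∃ z, F.IsSup D z) ∧
    (F.DedekindSigmaComplete ↔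
      ∀ x : ℕ → X, (∀ n, F.Pos (x n)) → F.Increasing x →
        (∃ y, F.UpperBound (Set.range x) y) → ∃ z, F.IsSup (Set.range x) z) := by
  constructor
  · constructor
    · intro h D hne _ _ hub
      exact h D hne hub
    · intro h A hne hub
      obtain ⟨a₀, ha₀⟩ := hne
      obtain ⟨y₀, hy₀⟩ := hub
      set C : Set X := {c | FuzzyRiesz.SupClosure F A c ∧ F.Le a₀ c} with hC
      set D : Set X := (fun t => t + -a₀) '' C with hD
      have hCa : ∀ x ∈ A, F.sup x a₀ ∈ C :=
        fun x hx => ⟨.sup (.base hx) (.base ha₀), F.le_sup_right _ _⟩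
      have hDne : D.Nonempty := ⟨_, ⟨_, hCa a₀ ha₀, rfl⟩⟩
      have hDpos : D ⊆ {x : X | F.Pos x} := by
        rintro _ ⟨c, ⟨hc, hle⟩, rfl⟩
        have := FuzzyRiesz.add_le'' hle (-a₀)
        rwa [add_neg_cancel] at this
      have hDdir : F.DirectedRight D := by
        intro E hE hEfin
        have hE'fin : ((fun t => t + a₀) '' E).Finite := hEfin.image _
        have hE'sub : (fun t => t + a₀) '' E ⊆ {x | FuzzyRiesz.SupClosure F A x} := by
          rintro _ ⟨e, he, rfl⟩
          obtain ⟨c, ⟨hc, _⟩, rfl⟩ := hE he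
          show FuzzyRiesz.SupClosure F A (c + -a₀ + a₀)
          rw [show c + -a₀ + a₀ = c by abel]
          exact hc
        obtain ⟨d, hd, hdle⟩ := FuzzyRiesz.supClosure_directed ha₀ hE'fin hE'sub
        refine ⟨F.sup d a₀ + -a₀, ⟨F.sup d a₀, ⟨.sup hd (.base ha₀), F.le_sup_right _ _⟩, rfl⟩, ?_⟩
        intro e he
        have h1 : F.Le (e + a₀) (F.sup d a₀) :=
          FuzzyRiesz.le_trans'' (hdle _ ⟨e, he, rfl⟩) (F.le_sup_left _ _)
        have := FuzzyRiesz.add_le'' h1 (-a₀)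
        rwa [add_neg_cancel_right] at this
      have hDub : F.UpperBound D (y₀ + -a₀) := by
        rintro _ ⟨c, ⟨hc, _⟩, rfl⟩
        exact FuzzyRiesz.add_le'' (FuzzyRiesz.supClosure_le hy₀ hc) (-a₀)
      obtain ⟨z, hz⟩ := h D hDne hDpos hDdir ⟨_, hDub⟩
      rw [hD] at hz
      have hz' := FuzzyRiesz.isSup_shift_back hz
      rw [neg_neg] at hz'
      refine ⟨z + a₀, ?_, ?_⟩
      · intro x hx
        exact FuzzyRiesz.le_trans'' (F.le_sup_left x a₀) (hz'.1 _ (hCa x hx))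
      · intro u hu
        exact hz'.2 u (fun c hc => FuzzyRiesz.supClosure_le hu hc.1)
  · constructor
    · intro h x hpos hinc hub
      exact (h (Set.range x) (Set.range_nonempty x) (Set.countable_range x)).1 hub
    · intro h A hne hct
      constructor
      · exact FuzzyRiesz.key_countable_sup h A hne hct
      · rintro ⟨y₀, hy₀⟩
        have hub' : F.UpperBound ((fun t => -t) '' A) (-y₀) := by
          rintro _ ⟨w, hw, rfl⟩
          exact FuzzyRiesz.neg_le'' (hy₀ w hw)
        obtain ⟨z, hz⟩ := FuzzyRiesz.key_countable_sup h ((fun t => -t) '' A)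
          (hne.image _) (hct.image _) ⟨-y₀, hub'⟩
        refine ⟨-z, ?_, ?_⟩
        · intro w hw
          have h1 : F.Le (-w) z := hz.1 _ ⟨w, hw, rfl⟩
          have := FuzzyRiesz.neg_le'' h1
          rwa [neg_neg] at this
        · intro u hu
          have hu' : F.UpperBound ((fun t => -t) '' A) (-u) := by
            rintro _ ⟨w, hw, rfl⟩
            exact FuzzyRiesz.neg_le'' (hu w hw)
          have := FuzzyRiesz.neg_le'' (hz.2 _ hu')
          rwa [neg_neg] at this
end

section
/- Let B₁ and B₂ be two disjoint fuzzy bands of a fuzzy Dedekind complete Riesz space X (i.e., |x|∧|y| = 0 for all x∈B₁, y∈B₂). Then B₁ ⊕ B₂ = {x₁+x₂ : x₁∈B₁, x₂∈B₂} is a fuzzy band of X. -/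
universe u

/-! ### Auxiliary general lattice-ordered group lemmas -/

section LatticeGroupAux

variable {A : Type*} [Lattice A] [AddCommGroup A] [AddLeftMono A] [AddRightMono A]

private lemma aux_abs_sub_le (u v : A) : |u - v| ≤ |u| + |v| := by
  rw [sub_eq_add_neg]
  exact (abs_add_le u (-v)).trans (by rw [abs_neg])

private lemma aux_neg_le_neg {a b : A} (h : a ≤ b) : -b ≤ -a := by
  have h2 := add_le_add_right h (-a - b)
  have e1 : -a - b + a = -b := by abel
  have e2 : -a - b + b = -a := by abel
  rwa [e1, e2] at h2

private lemma aux_inf_add_le {p q r : A} (hp : 0 ≤ p) (hq : 0 ≤ q) (hr : 0 ≤ r) :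
    p ⊓ (q + r) ≤ p ⊓ q + p ⊓ r := by
  have h1 : p ⊓ q + p ⊓ r = ((p + p) ⊓ (q + p)) ⊓ ((p + r) ⊓ (q + r)) := by
    rw [← inf_add _ _ p, ← inf_add _ _ r, ← add_inf _ _ (p ⊓ q)]
  rw [h1]
  refine le_inf (le_inf ?_ ?_) (le_inf ?_ ?_)
  · exact inf_le_left.trans (le_add_of_nonneg_right hp)
  · exact inf_le_left.trans (le_add_of_nonneg_left hq)
  · exact inf_le_left.trans (le_add_of_nonneg_right hr)
  · exact inf_le_right

private lemma aux_abs_le_abs_add {u v : A} (h : |u| ⊓ |v| = 0) : |u| ≤ |u + v| := by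
  have h1 : |u| ≤ |u + v| + |v| := by
    have : u = (u + v) - v := by abel
    calc |u| = |(u + v) - v| := by rw [← this]
      _ ≤ |u + v| + |v| := aux_abs_sub_le _ _
  calc |u| = |u| ⊓ (|u + v| + |v|) := (inf_eq_left.2 h1).symm
    _ ≤ |u| ⊓ |u + v| + |u| ⊓ |v| :=
        aux_inf_add_le (abs_nonneg u) (abs_nonneg (u + v)) (abs_nonneg v)
    _ = |u| ⊓ |u + v| := by rw [h, add_zero]
    _ ≤ |u + v| := inf_le_right

private lemma aux_abs_add_eq {u v : A} (h : |u| ⊓ |v| = 0) : |u + v| = |u| + |v| := by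
  refine le_antisymm (abs_add_le u v) ?_
  have h' : |v| ⊓ |u| = 0 := by rwa [inf_comm]
  calc |u| + |v| = |u| ⊓ |v| + (|u| ⊔ |v|) := (inf_add_sup _ _).symm
    _ = |u| ⊔ |v| := by rw [h, zero_add]
    _ ≤ |u + v| := sup_le (aux_abs_le_abs_add h)
        (by rw [add_comm]; exact aux_abs_le_abs_add h')

private lemma aux_riesz {x p q : A} (hp : 0 ≤ p) (hq : 0 ≤ q) (h : |x| ≤ p + q) :
    ∃ x₁ x₂ : A, x = x₁ + x₂ ∧ |x₁| ≤ p ∧ |x₂| ≤ q := by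
  obtain ⟨hx1, hx2⟩ := abs_le'.1 h
  set x₁ : A := (x ⊔ -p) ⊓ p with hx₁def
  have hnp : -p ≤ x₁ := le_inf le_sup_right ((neg_nonpos.2 hp).trans hp)
  have hx₁p : |x₁| ≤ p := abs_le'.2 ⟨inf_le_right, neg_le.2 hnp⟩
  have hrw : x - x₁ = (0 ⊓ (x + p)) ⊔ (x - p) := by
    rw [hx₁def, sub_inf, sub_sup, sub_self, sub_neg_eq_add]
  have hxlow : -(p + q) ≤ x := neg_le.1 hx2
  have hupper : x - x₁ ≤ q := by
    rw [hrw]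
    refine sup_le (inf_le_left.trans hq) ?_
    rw [sub_le_iff_le_add, add_comm]
    exact hx1
  have hlower : -q ≤ x - x₁ := by
    rw [hrw]
    refine le_trans ?_ le_sup_left
    refine le_inf (neg_nonpos.2 hq) ?_
    have : -(p + q) + p ≤ x + p := add_le_add_left hxlow p
    calc -q = -(p + q) + p := by abel
      _ ≤ x + p := this
  exact ⟨x₁, x - x₁, by abel, hx₁p, abs_le'.2 ⟨hupper, neg_le.2 hlower⟩⟩

private lemma aux_exists_glb
    (hSup : ∀ S : Set A, S.Nonempty → (∃ ub, ub ∈ upperBounds S) → ∃ z, IsLUB S z)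
    (S : Set A) (hne : S.Nonempty) (hbd : ∃ lb, lb ∈ lowerBounds S) : ∃ z, IsGLB S z := by
  obtain ⟨lb, hlb⟩ := hbd
  obtain ⟨z, hz⟩ := hSup (Neg.neg '' S) (hne.image _)
    ⟨-lb, by rintro _ ⟨s, hs, rfl⟩; exact aux_neg_le_neg (hlb hs)⟩
  refine ⟨-z, ?_, ?_⟩
  · intro s hs
    have : -s ≤ z := hz.1 ⟨s, hs, rfl⟩
    simpa using aux_neg_le_neg this
  · intro w hw
    have : z ≤ -w := hz.2 (by rintro _ ⟨s, hs, rfl⟩; exact aux_neg_le_neg (hw hs))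
    simpa using aux_neg_le_neg this

private lemma aux_limsup {ι : Type*} [Preorder ι] [Nonempty ι] [IsDirected ι (· ≤ ·)]
    (hSup : ∀ S : Set A, S.Nonempty → (∃ ub, ub ∈ upperBounds S) → ∃ z, IsLUB S z)
    (y a : ι → A) (hdec : ∀ i j, i ≤ j → y j ≤ y i) (hpos : ∀ i, 0 ≤ y i)
    (hC : ∀ i j, |a i - a j| ≤ y i + y j) :
    ∃ α : A, ∀ k, |a k - α| ≤ y k + y k := by
  have key : ∀ k j, k ≤ j → a k - (y k + y k) ≤ a j := by
    intro k j hkj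
    have h1 : a k - a j ≤ y k + y j := (le_abs_self _).trans (hC k j)
    have h2 : y k + y j ≤ y k + y k := add_le_add_right (hdec k j hkj) _
    exact sub_le_comm.1 (h1.trans h2)
  have keyub : ∀ k j, k ≤ j → a j ≤ a k + (y k + y k) := by
    intro k j hkj
    have h1 : a j - a k ≤ y j + y k := (le_abs_self _).trans (hC j k)
    have h2 : y j + y k ≤ y k + y k := add_le_add_left (hdec k j hkj) _
    have h3 : a j ≤ (y k + y k) + a k := sub_le_iff_le_add.1 (h1.trans h2)
    rwa [add_comm] at h3
  have hS : ∀ k : ι, ∃ z, IsLUB (a '' {i | k ≤ i}) z := by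
    intro k
    refine hSup _ ⟨a k, ⟨k, le_refl k, rfl⟩⟩ ⟨a k + (y k + y k), ?_⟩
    rintro _ ⟨i, hi, rfl⟩
    exact keyub k i hi
  choose u hu using hS
  have hlb : ∀ k m : ι, a k - (y k + y k) ≤ u m := by
    intro k m
    obtain ⟨j, hkj, hmj⟩ := exists_ge_ge k m
    exact (key k j hkj).trans ((hu m).1 ⟨j, hmj, rfl⟩)
  obtain ⟨k₀⟩ := ‹Nonempty ι›
  obtain ⟨α, hα⟩ := aux_exists_glb hSup (Set.range u) ⟨u k₀, ⟨k₀, rfl⟩⟩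
    ⟨a k₀ - (y k₀ + y k₀), by rintro _ ⟨m, rfl⟩; exact hlb k₀ m⟩
  refine ⟨α, fun k => abs_le'.2 ⟨?_, ?_⟩⟩
  · have h1 : a k - (y k + y k) ≤ α := hα.2 (by rintro _ ⟨m, rfl⟩; exact hlb k m)
    exact sub_le_comm.1 h1
  · have h1 : α ≤ u k := hα.1 ⟨k, rfl⟩
    have h2 : u k ≤ a k + (y k + y k) := (hu k).2 (by rintro _ ⟨i, hi, rfl⟩; exact keyub k i hi)
    rw [neg_sub, sub_le_iff_le_add, add_comm]
    exact h1.trans h2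

private lemma aux_glb_double [Module ℝ A]
    (hsmul : ∀ (c : ℝ) (a b : A), 0 ≤ c → a ≤ b → c • a ≤ c • b)
    {ι : Type*} (y : ι → A)
    (h : IsGLB (Set.range y) 0) : IsGLB (Set.range fun k => y k + y k) 0 := by
  constructor
  · rintro _ ⟨k, rfl⟩
    have h0 : (0 : A) ≤ y k := h.1 ⟨k, rfl⟩
    exact add_nonneg h0 h0
  · intro w hw
    have h1 : ∀ k, (1/2 : ℝ) • w ≤ y k := by
      intro k
      have h2 := hsmul (1/2) w (y k + y k) (by norm_num) (hw ⟨k, rfl⟩)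
      rwa [smul_add, ← add_smul, (by norm_num : (1/2 : ℝ) + 1/2 = 1), one_smul] at h2
    have h2 : (1/2 : ℝ) • w ≤ 0 := h.2 (by rintro _ ⟨k, rfl⟩; exact h1 k)
    have h3 := hsmul 2 _ 0 (by norm_num) h2
    rwa [smul_zero, smul_smul, (by norm_num : (2:ℝ) * (1/2) = 1), one_smul] at h3

end LatticeGroupAux

/-- The lattice structure on `X` induced by the fuzzy order. -/
def FuzzyRiesz.lat {X : Type*} [AddCommGroup X] [Module ℝ X] (F : FuzzyRiesz X) :
    Lattice X where
  le a b := 1/2 < F.μ a b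
  le_refl a := by show 1/2 < F.μ a a; rw [F.refl]; norm_num
  le_trans a b c h1 h2 := lt_of_lt_of_le (lt_min h1 h2) (F.trans a b c)
  le_antisymm a b h1 h2 := F.antisymm a b (by
    have h1' : 1/2 < F.μ a b := h1
    have h2' : 1/2 < F.μ b a := h2
    linarith)
  sup := F.sup
  le_sup_left := F.le_sup_left
  le_sup_right := F.le_sup_right
  sup_le := F.sup_le
  inf := F.inf
  inf_le_left := F.inf_le_left
  inf_le_right := F.inf_le_right
  le_inf a b c h1 h2 := F.le_inf b c a h1 h2

/-- the sum of two disjoint fuzzy bands of a fuzzy Dedekind complete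
Riesz space is a fuzzy band. -/
theorem disjoint_bands_sum_isBand {X : Type*} [AddCommGroup X] [Module ℝ X]
    (F : FuzzyRiesz X) (hD : F.DedekindComplete) (B₁ B₂ : Set X)
    (h₁ : FuzzyRiesz.IsBand.{u} F B₁) (h₂ : FuzzyRiesz.IsBand.{u} F B₂)
    (hdisj : ∀ x ∈ B₁, ∀ y ∈ B₂, F.inf (F.fabs x) (F.fabs y) = 0) :
    FuzzyRiesz.IsBand.{u} F (FuzzyRiesz.sumSet B₁ B₂) := by
  classical
  letI instL : Lattice X := F.lat
  haveI instA : AddLeftMono X := ⟨fun c a b h => by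
    show 1/2 < F.μ (c + a) (c + b)
    rw [add_comm c a, add_comm c b]
    exact lt_of_lt_of_le h (F.add_compat a b c h)⟩
  haveI instB : AddRightMono X := ⟨fun c a b h =>
    lt_of_lt_of_le h (F.add_compat a b c h)⟩
  have hsmul : ∀ (c : ℝ) (a b : X), 0 ≤ c → a ≤ b → c • a ≤ c • b :=
    fun c a b hc h => lt_of_lt_of_le h (F.smul_compat a b c hc h)
  have hSup : ∀ S : Set X, S.Nonempty → (∃ ub, ub ∈ upperBounds S) → ∃ z, IsLUB S z := by
    intro S hne ⟨ub, hub⟩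
    obtain ⟨z, hz1, hz2⟩ := hD S hne ⟨ub, fun s hs => hub hs⟩
    exact ⟨z, fun s hs => hz1 s hs, fun w hw => hz2 w (fun s hs => hw hs)⟩
  have hfabs : ∀ x : X, F.fabs x = |x| := fun _ => rfl
  -- membership of differences
  have hsub₁ : ∀ {u v : X}, u ∈ B₁ → v ∈ B₁ → u - v ∈ B₁ := by
    intro u v hu hv
    have h2 := h₁.1.smul_mem (-1) hv
    rw [neg_one_smul] at h2
    rw [sub_eq_add_neg]
    exact h₁.1.add_mem hu h2
  have hsub₂ : ∀ {u v : X}, u ∈ B₂ → v ∈ B₂ → u - v ∈ B₂ := by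
    intro u v hu hv
    have h2 := h₂.1.smul_mem (-1) hv
    rw [neg_one_smul] at h2
    rw [sub_eq_add_neg]
    exact h₂.1.add_mem hu h2
  have hdisj' : ∀ {u v : X}, u ∈ B₁ → v ∈ B₂ → |u| ⊓ |v| = 0 :=
    fun hu hv => hdisj _ hu _ hv
  constructor
  · -- the sum is a fuzzy ideal
    refine ⟨⟨0, h₁.1.zero_mem, 0, h₂.1.zero_mem, by rw [add_zero]⟩, ?_, ?_, ?_⟩
    · rintro x y ⟨a₁, ha₁, b₁, hb₁, rfl⟩ ⟨a₂, ha₂, b₂, hb₂, rfl⟩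
      exact ⟨a₁ + a₂, h₁.1.add_mem ha₁ ha₂, b₁ + b₂, h₂.1.add_mem hb₁ hb₂, by abel⟩
    · rintro c x ⟨a, ha, b, hb, rfl⟩
      exact ⟨c • a, h₁.1.smul_mem c ha, c • b, h₂.1.smul_mem c hb, by rw [smul_add]⟩
    · rintro x y hxy ⟨y₁, hy₁, y₂, hy₂, rfl⟩
      have hd : |y₁| ⊓ |y₂| = 0 := hdisj' hy₁ hy₂
      have habs : |x| ≤ |y₁| + |y₂| := by
        have h0 : |x| ≤ |y₁ + y₂| := hxy
        rwa [aux_abs_add_eq hd] at h0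
      obtain ⟨x₁, x₂, hxeq, hx₁, hx₂⟩ := aux_riesz (abs_nonneg y₁) (abs_nonneg y₂) habs
      have hx₁B : x₁ ∈ B₁ := h₁.1.solid x₁ y₁ hx₁ hy₁
      have hx₂B : x₂ ∈ B₂ := h₂.1.solid x₂ y₂ hx₂ hy₂
      exact ⟨x₁, hx₁B, x₂, hx₂B, hxeq⟩
  · -- the sum is fuzzy order closed
    intro ι _ _ _ x l hx hconv
    obtain ⟨y, hy1, hy2, hy3⟩ := hconv
    choose a ha b hb hab using hx
    have hyglb : IsGLB (Set.range y) 0 :=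
      ⟨fun s hs => hy3.1 s hs, fun w hw => hy3.2 w (fun s hs => hw hs)⟩
    have hypos : ∀ i, 0 ≤ y i := fun i => hyglb.1 ⟨i, rfl⟩
    have hydec : ∀ i j : ι, i ≤ j → y j ≤ y i := fun i j h => hy2 i j h
    have hxl : ∀ i, |x i - l| ≤ y i := fun i => hy1 i
    have hC : ∀ i j, |a i - a j| ≤ y i + y j := by
      intro i j
      have hd : |a i - a j| ⊓ |b i - b j| = 0 :=
        hdisj' (hsub₁ (ha i) (ha j)) (hsub₂ (hb i) (hb j))
      have h1 : |a i - a j| ≤ |x i - x j| := by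
        have he : x i - x j = (a i - a j) + (b i - b j) := by
          rw [hab i, hab j]; abel
        rw [he, aux_abs_add_eq hd]
        exact le_add_of_nonneg_right (abs_nonneg _)
      have h2 : |x i - x j| ≤ y i + y j := by
        have he : x i - x j = (x i - l) - (x j - l) := by abel
        rw [he]
        exact (aux_abs_sub_le _ _).trans (add_le_add (hxl i) (hxl j))
      exact h1.trans h2
    obtain ⟨α, hα⟩ := aux_limsup hSup y a hydec hypos hC
    have hαB : α ∈ B₁ := by
      refine h₁.2 ι a α ha ⟨fun k => y k + y k, fun k => hα k, ?_, ?_⟩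
      · exact fun i j h => add_le_add (hydec i j h) (hydec i j h)
      · have hg := aux_glb_double hsmul y hyglb
        exact ⟨fun s hs => hg.1 hs, fun w hw => hg.2 (fun s hs => hw s hs)⟩
    have hCb : ∀ k, |b k - (l - α)| ≤ (y k + y k) + (y k + y k) := by
      intro k
      have he : b k - (l - α) = (x k - l) - (a k - α) := by rw [hab k]; abel
      rw [he]
      refine (aux_abs_sub_le _ _).trans ?_
      refine add_le_add ?_ (hα k)
      exact (hxl k).trans (le_add_of_nonneg_right (hypos k))
    have hβB : (l - α) ∈ B₂ := by
      refine h₂.2 ι b (l - α) hb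
        ⟨fun k => (y k + y k) + (y k + y k), fun k => hCb k, ?_, ?_⟩
      · exact fun i j h => add_le_add (add_le_add (hydec i j h) (hydec i j h))
          (add_le_add (hydec i j h) (hydec i j h))
      · have hg := aux_glb_double hsmul _ (aux_glb_double hsmul y hyglb)
        exact ⟨fun s hs => hg.1 hs, fun w hw => hg.2 (fun s hs => hw s hs)⟩
    exact ⟨α, hαB, l - α, hβB, by rw [add_sub_cancel]⟩
end
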